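/- Let R > 0, C > 0, μ > 0 and n ≥ 1, and let R_1, …, R_n be independent random variables each with probability density f(r) = 2r/R² on (0, R]. Then E[ ∏_{i=1}^n (C·R_i/μ)/(1 + C·R_i/μ) ] = (1 − a)^n, where a = 2μ/(R·C) − (2μ²/(R²·C²))·log(1 + R·C/μ). -/

import Mathlib

open MeasureTheory ProbabilityTheory
open scoped ENNReal NNReal

lemma prod_integral_of_iIndep {Ω : Type*} [MeasurableSpace Ω] (P : Measure Ω)
    [IsProbabilityMeasure P] {ι : Type*} (Y : ι → Ω → ℝ)
    (hmeas : ∀ i, Measurable (Y i))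
    (hindep : iIndepFun Y P) (s : Finset ι) :
    ∫ ω, (∏ i ∈ s, Y i ω) ∂P = ∏ i ∈ s, ∫ ω, Y i ω ∂P := by
  classical
  induction s using Finset.induction_on with
  | empty => simp
  | @insert i s hi ih =>
    have hsm : AEStronglyMeasurable (∏ j ∈ s, Y j) P := by
      rw [Finset.prod_fn]
      exact (Finset.measurable_prod s fun j _ => hmeas j).aestronglyMeasurable
    have hIF : IndepFun (∏ j ∈ s, Y j) (Y i) P :=
      hindep.indepFun_finsetProd_of_notMem hmeas hi
    have h2 : ∫ ω, (Y i * ∏ j ∈ s, Y j) ω ∂P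
        = (∫ ω, Y i ω ∂P) * ∫ ω, (∏ j ∈ s, Y j) ω ∂P :=
      hIF.symm.integral_mul_eq_mul_integral (hmeas i).aestronglyMeasurable hsm
    have h3 : ∀ ω, (Y i * ∏ j ∈ s, Y j) ω = Y i ω * ∏ j ∈ s, Y j ω := by
      intro ω; simp [Finset.prod_apply]
    have h4 : ∀ ω, (∏ j ∈ s, Y j) ω = ∏ j ∈ s, Y j ω := by
      intro ω; simp [Finset.prod_apply]
    simp only [h3, h4] at h2
    rw [Finset.prod_insert hi, ← ih]
    simp only [Finset.prod_insert hi]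
    exact h2

lemma single_integral (R C mu : ℝ) (hR : 0 < R) (hC : 0 < C) (hmu : 0 < mu) :
    ∫ r in (0:ℝ)..R, (2 * r / R ^ 2) * ((C * r / mu) / (1 + C * r / mu))
      = 1 - (2 * mu / (R * C) - 2 * mu ^ 2 / (R ^ 2 * C ^ 2) * Real.log (1 + R * C / mu)) := by
  have hR0 : R ≠ 0 := hR.ne'
  have hC0 : C ≠ 0 := hC.ne'
  have hmu0 : mu ≠ 0 := hmu.ne'
  set F : ℝ → ℝ := fun r =>
    r ^ 2 / R ^ 2 - 2 * mu / (R ^ 2 * C) * r + 2 * mu ^ 2 / (R ^ 2 * C ^ 2) * Real.log (1 + C * r / mu)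
  have hpos : ∀ r ∈ Set.uIcc (0:ℝ) R, 0 < 1 + C * r / mu := by
    intro r hr
    rw [Set.uIcc_of_le hR.le] at hr
    have hr0 : 0 ≤ r := hr.1
    have : 0 ≤ C * r / mu := by positivity
    linarith
  have hderiv : ∀ r ∈ Set.uIcc (0:ℝ) R,
      HasDerivAt F ((2 * r / R ^ 2) * ((C * r / mu) / (1 + C * r / mu))) r := by
    intro r hr
    have hne : (1 + C * r / mu) ≠ 0 := (hpos r hr).ne'
    have h1 : HasDerivAt (fun r : ℝ => r ^ 2 / R ^ 2) (2 * r / R ^ 2) r := by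
      simpa using (hasDerivAt_pow 2 r).div_const (R ^ 2)
    have h2 : HasDerivAt (fun r : ℝ => 2 * mu / (R ^ 2 * C) * r) (2 * mu / (R ^ 2 * C)) r := by
      simpa using (hasDerivAt_id r).const_mul (2 * mu / (R ^ 2 * C))
    have h3 : HasDerivAt (fun r : ℝ => 1 + C * r / mu) (C / mu) r := by
      simpa [mul_comm] using (((hasDerivAt_id r).const_mul C).div_const mu).const_add 1
    have h4 : HasDerivAt (fun r : ℝ => 2 * mu ^ 2 / (R ^ 2 * C ^ 2) * Real.log (1 + C * r / mu))
        (2 * mu ^ 2 / (R ^ 2 * C ^ 2) * ((C / mu) / (1 + C * r / mu))) r :=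
      (h3.log hne).const_mul _
    have := (h1.sub h2).add h4
    have hr0 : 0 ≤ r := ((Set.uIcc_of_le hR.le ▸ hr).1)
    have hadd : mu + C * r ≠ 0 := by positivity
    convert this using 1
    · rfl
    · rfl
    · rfl
    have hadd' : r * C + mu ≠ 0 := by positivity
    field_simp
    ring
  have hcont : ContinuousOn
      (fun r => (2 * r / R ^ 2) * ((C * r / mu) / (1 + C * r / mu))) (Set.uIcc (0:ℝ) R) := by
    apply ContinuousOn.mul
    · fun_prop
    · apply ContinuousOn.div
      · fun_prop
      · fun_prop
      · intro r hr; exact (hpos r hr).ne'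
  rw [intervalIntegral.integral_eq_sub_of_hasDerivAt hderiv (hcont.intervalIntegrable)]
  have hlog : (1 : ℝ) + C * 0 / mu = 1 := by ring
  simp only [F]
  rw [show (1 : ℝ) + C * R / mu = 1 + R * C / mu by ring]
  field_simp
  rw [mul_zero, add_zero, div_self hmu0, Real.log_one]
  ring

/-- For `n ≥ 1` i.i.d. link lengths `R₁, …, Rₙ` with density `2r/R²` on `(0, R]`, the
expected product of the single-link blocking probabilities `(C Rᵢ/μ)/(1 + C Rᵢ/μ)` is
`(1 - a)ⁿ`, where `a = 2μ/(RC) - (2μ²/(R²C²)) log (1 + RC/μ)`. -/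
theorem expected_product_blockage
    {Ω : Type*} [MeasurableSpace Ω] (P : Measure Ω) [IsProbabilityMeasure P]
    (R C mu : ℝ) (hR : 0 < R) (hC : 0 < C) (hmu : 0 < mu)
    (n : ℕ) (hn : 1 ≤ n)
    (X : Fin n → Ω → ℝ) (hmeas : ∀ i, Measurable (X i))
    (hindep : iIndepFun X P)
    (hdist : ∀ i, Measure.map (X i) P
      = volume.withDensity (fun r => ENNReal.ofReal (if r ∈ Set.Ioc 0 R then 2 * r / R ^ 2 else 0)))
    (a : ℝ)
    (ha : a = 2 * mu / (R * C) - 2 * mu ^ 2 / (R ^ 2 * C ^ 2) * Real.log (1 + R * C / mu)) :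
    ∫ ω, (∏ i, (C * X i ω / mu) / (1 + C * X i ω / mu)) ∂P = (1 - a) ^ n := by
  set g : ℝ → ℝ := fun r => (C * r / mu) / (1 + C * r / mu) with hg_def
  have hg : Measurable g := by fun_prop
  set Y : Fin n → Ω → ℝ := fun i ω => g (X i ω) with hY_def
  have hYmeas : ∀ i, Measurable (Y i) := fun i => hg.comp (hmeas i)
  have hYindep : iIndepFun Y P :=
    hindep.comp (fun _ => g) (fun _ => hg)
  have hstep := prod_integral_of_iIndep P Y hYmeas hYindep Finset.univ
  set f : ℝ → ℝ := fun r => if r ∈ Set.Ioc 0 R then 2 * r / R ^ 2 else 0 with hf_def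
  have hf_meas : Measurable f := by
    apply Measurable.ite measurableSet_Ioc <;> fun_prop
  have hf_nonneg : ∀ r, 0 ≤ f r := by
    intro r
    simp only [hf_def]
    split
    · rename_i h
      have : 0 < r := h.1
      positivity
    · exact le_refl 0
  have hsingle : ∀ i, ∫ ω, Y i ω ∂P = 1 - a := by
    intro i
    have h1 : ∫ ω, Y i ω ∂P = ∫ r, g r ∂(Measure.map (X i) P) :=
      (integral_map (hmeas i).aemeasurable hg.aestronglyMeasurable).symm
    rw [h1, hdist i]
    have h2 : (fun r => ENNReal.ofReal (if r ∈ Set.Ioc 0 R then 2 * r / R ^ 2 else 0))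
        = fun r => ((f r).toNNReal : ℝ≥0∞) := rfl
    rw [h2, integral_withDensity_eq_integral_smul (hf_meas.real_toNNReal) g]
    have h3 : ∀ r, (f r).toNNReal • g r = (Set.Ioc 0 R).indicator (fun r => (2 * r / R ^ 2) * g r) r := by
      intro r
      rw [NNReal.smul_def, Real.coe_toNNReal _ (hf_nonneg r)]
      simp only [hf_def, Set.indicator_apply, smul_eq_mul, ite_mul, zero_mul]
    simp only [h3]
    rw [integral_indicator measurableSet_Ioc,
      ← intervalIntegral.integral_of_le hR.le, single_integral R C mu hR hC hmu, ha]
  have hfinal : ∫ ω, (∏ i, (C * X i ω / mu) / (1 + C * X i ω / mu)) ∂P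
      = ∏ i, ∫ ω, Y i ω ∂P := hstep
  rw [hfinal]
  simp only [hsingle]
  rw [Finset.prod_const, Finset.card_univ, Fintype.card_fin]
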